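/- Let A be a C*-algebra with an increasing countable approximate unit (pₙ)_{n∈ℕ} consisting of projections. Then the following are equivalent: (ii) for every projection p ∈ A there exists a projection q ∈ A such that p ∼ q and pq = 0; (iii) for every n ∈ ℕ there exists m > n such that pₙ ≲ pₘ − pₙ. -/

import Mathlib

set_option maxHeartbeats 1000000

/-- A projection in a C*-algebra: a self-adjoint idempotent. -/
def IsProjection {A : Type*} [NonUnitalCStarAlgebra A] (p : A) : Prop :=
  star p = p ∧ p * p = p

/-- Murray–von Neumann equivalence of projections: `p ∼ q` iff there is `v`
with `v* v = p` and `v v* = q`. -/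
def MvNEquiv {A : Type*} [NonUnitalCStarAlgebra A] (p q : A) : Prop :=
  ∃ v : A, star v * v = p ∧ v * star v = q

/-- `p ≲ q`: `p` is equivalent to a subprojection of `q`, i.e. there is `v`
with `v v* = p` and `v* v ≤ q`. -/
def MvNSubEquiv {A : Type*} [NonUnitalCStarAlgebra A] [PartialOrder A]
    (p q : A) : Prop :=
  ∃ v : A, v * star v = p ∧ star v * v ≤ q

section ProjLemmas
variable {A : Type*} [NonUnitalCStarAlgebra A] [PartialOrder A] [StarOrderedRing A]

lemma IsProjection.nonneg' {p : A} (hp : IsProjection p) : 0 ≤ p := by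
  have := star_mul_self_nonneg p
  rwa [hp.1, hp.2] at this

omit [PartialOrder A] [StarOrderedRing A] in
lemma IsProjection.norm_le_one' {p : A} (hp : IsProjection p) : ‖p‖ ≤ 1 := by
  have h1 : ‖p‖ * ‖p‖ = ‖p‖ := by
    rw [← CStarRing.norm_star_mul_self (x := p), hp.1, hp.2]
  nlinarith [norm_nonneg p]

/-- if `p ≤ q` for projections then `p * q = p`. -/
lemma IsProjection.mul_eq_of_le {p q : A} (hp : IsProjection p) (hq : IsProjection q)
    (h : p ≤ q) : p * q = p := by
  set f : A → A := fun x => x - q * x - x * q + q * x * q with hf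
  have hadd : ∀ x y, f (x + y) = f x + f y := by
    intro x y; simp only [hf, mul_add, add_mul]; abel
  have hpos : ∀ x, 0 ≤ x → 0 ≤ f x := by
    intro x hx
    rw [StarOrderedRing.nonneg_iff] at hx
    induction hx using AddSubmonoid.closure_induction with
    | mem x hx =>
      obtain ⟨s, rfl⟩ := hx
      have : f (star s * s) = star (s - s * q) * (s - s * q) := by
        simp only [hf, star_sub, star_mul, hq.1, sub_mul, mul_sub]
        noncomm_ring
      rw [this]; exact star_mul_self_nonneg _
    | zero => simp only [hf]; simp
    | add x y _ _ hx hy => rw [hadd]; exact add_nonneg hx hy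
  have hfq : f q = 0 := by simp only [hf, hq.2]; abel
  have hfsub : f (q - p) = f q - f p := by
    have := hadd (q - p) p; simp only [sub_add_cancel] at this
    rw [this]; abel
  have h1 : 0 ≤ f q - f p := hfsub ▸ hpos _ (sub_nonneg.mpr h)
  have h2 : f p ≤ 0 := by rwa [hfq, zero_sub, neg_nonneg] at h1
  have hpp : ∀ x : A, x * p * p = x * p := fun x => by rw [mul_assoc, hp.2]
  have key : f p = star (p - p * q) * (p - p * q) := by
    simp only [hf, star_sub, star_mul, hp.1, hq.1, sub_mul, mul_sub, ← mul_assoc, hp.2, hpp]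
    abel
  have h3 : 0 ≤ f p := by rw [key]; exact star_mul_self_nonneg _
  have h5 : star (p - p * q) * (p - p * q) = 0 := by rw [← key, le_antisymm h2 h3]
  have h6 : p - p * q = 0 := by
    rwa [CStarRing.star_mul_self_eq_zero_iff] at h5
  exact (sub_eq_zero.mp h6).symm

lemma IsProjection.mul_eq_of_le' {p q : A} (hp : IsProjection p) (hq : IsProjection q)
    (h : p ≤ q) : q * p = p := by
  have := congrArg star (hp.mul_eq_of_le hq h)
  rwa [star_mul, hp.1, hq.1] at this

lemma IsProjection.sub_proj {p q : A} (hp : IsProjection p) (hq : IsProjection q)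
    (h : p ≤ q) : IsProjection (q - p) := by
  refine ⟨by rw [star_sub, hp.1, hq.1], ?_⟩
  have h1 := hp.mul_eq_of_le hq h
  have h2 := hp.mul_eq_of_le' hq h
  simp only [sub_mul, mul_sub, hp.2, hq.2, h1, h2]
  abel

lemma IsProjection.le_of_mul {p q : A} (hp : IsProjection p) (hq : IsProjection q)
    (hqp : q * p = p) : p ≤ q := by
  have hpq : p * q = p := by
    have := congrArg star hqp
    rwa [star_mul, hp.1, hq.1] at this
  have hsub : IsProjection (q - p) := by
    refine ⟨by rw [star_sub, hp.1, hq.1], ?_⟩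
    simp only [sub_mul, mul_sub, hp.2, hq.2, hqp, hpq]
    abel
  exact sub_nonneg.mp hsub.nonneg'

omit [PartialOrder A] [StarOrderedRing A] in
/-- if `v v*` is a projection, `v` is a partial isometry and `v* v` is a projection. -/
lemma IsProjection.partial_isometry {v : A} (h : IsProjection (v * star v)) :
    v * star v * v = v ∧ IsProjection (star v * v) := by
  have hP2 : v * star v * v * star v = v * star v := by
    have := h.2; rwa [← mul_assoc] at this
  have hu : (v * star v * v - v) * star (v * star v * v - v) = 0 := by
    have hstar : star (v * star v * v - v) = star v * (v * star v) - star v := by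
      simp only [star_sub, star_mul, star_star]
    rw [hstar]
    simp only [sub_mul, mul_sub, ← mul_assoc, hP2]
    abel
  have hu0 : v * star v * v - v = 0 := by
    have h1 : star (star (v * star v * v - v)) * star (v * star v * v - v) = 0 := by
      rwa [star_star]
    rw [CStarRing.star_mul_self_eq_zero_iff] at h1
    have := congrArg star h1
    rwa [star_star, star_zero] at this
  have hv : v * star v * v = v := sub_eq_zero.mp hu0
  refine ⟨hv, ⟨by rw [star_mul, star_star], ?_⟩⟩
  calc star v * v * (star v * v) = star v * (v * star v * v) := by noncomm_ring
  _ = star v * v := by rw [hv]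

end ProjLemmas

section Unital
variable {B : Type*} [CStarAlgebra B]

/-- commutation passes to the continuous functional calculus. -/
lemma Commute.cfc_real_aux {d b : B} (hd : IsSelfAdjoint d) (h : Commute b d) (f : ℝ → ℝ) :
    Commute b (cfc f d) := by
  by_cases hf : ContinuousOn f (spectrum ℝ d)
  · let S : Subalgebra ℝ C(spectrum ℝ d, ℝ) :=
      (Subalgebra.centralizer ℝ ({b} : Set B)).comap (cfcHom hd (R := ℝ)).toAlgHom
    have hmem : ∀ g : C(spectrum ℝ d, ℝ), g ∈ S ↔ Commute b (cfcHom hd g) := by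
      intro g
      rw [Subalgebra.mem_comap, Subalgebra.mem_centralizer_iff]
      constructor
      · intro hg; exact (hg b (Set.mem_singleton b))
      · intro hg c hc; rw [Set.mem_singleton_iff] at hc; subst hc; exact hg
    have hclosed : IsClosed (S : Set C(spectrum ℝ d, ℝ)) := by
      have heq : (S : Set C(spectrum ℝ d, ℝ)) =
          (fun g => b * cfcHom hd g - cfcHom hd g * b) ⁻¹' {0} := by
        ext g
        simp only [Set.mem_preimage, Set.mem_singleton_iff, sub_eq_zero, SetLike.mem_coe, hmem]
        exact Iff.rfl
      rw [heq]
      have hcont : Continuous (cfcHom hd (R := ℝ) : C(spectrum ℝ d, ℝ) → B) :=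
        (cfcHom_isClosedEmbedding hd).continuous
      exact IsClosed.preimage (by fun_prop) isClosed_singleton
    have hsep : S.SeparatesPoints := by
      intro x y hxy
      refine ⟨_, ⟨(ContinuousMap.restrict (spectrum ℝ d) (ContinuousMap.id ℝ)), ?_, rfl⟩, ?_⟩
      · rw [SetLike.mem_coe, hmem, cfcHom_id hd]
        exact h
      · simp only [ContinuousMap.restrict_apply, ContinuousMap.id_apply]
        exact fun hc => hxy (Subtype.ext hc)
    have htop := ContinuousMap.subalgebra_topologicalClosure_eq_top_of_separatesPoints S hsep
    have hST : ∀ g : C(spectrum ℝ d, ℝ), g ∈ S := by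
      intro g
      have hg : g ∈ S.topologicalClosure := htop ▸ Algebra.mem_top
      have hcar : (S.topologicalClosure : Set C(spectrum ℝ d, ℝ)) = closure (S : Set _) := rfl
      rw [← SetLike.mem_coe, hcar, hclosed.closure_eq] at hg
      exact hg
    rw [cfc_apply f d hd hf]
    exact (hmem _).mp (hST _)
  · rw [cfc_apply_of_not_continuousOn d hf]; exact Commute.zero_right b

variable [Nontrivial B]

/-- two projections at distance `< 1` in a unital C*-algebra are conjugate by a unitary. -/
lemma exists_unitary_conj {Q E : B} (hQ : star Q = Q ∧ Q * Q = Q)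
    (hE : star E = E ∧ E * E = E) (h : ‖Q - E‖ < 1) :
    ∃ z : B, star z * z = 1 ∧ z * star z = 1 ∧ z * Q = E * z := by
  set k : B := (Q - E) * (Q - E) with hk_def
  have hk_norm : ‖k‖ < 1 := by
    calc ‖k‖ ≤ ‖Q - E‖ * ‖Q - E‖ := norm_mul_le _ _
    _ < 1 := by nlinarith [norm_nonneg (Q - E)]
  set d : B := 1 - k with hd_def
  set x : B := 1 - E - Q + E * Q + E * Q with hx_def
  have hxQQ : ∀ y : B, y * Q * Q = y * Q := fun y => by rw [mul_assoc, hQ.2]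
  have hxEE : ∀ y : B, y * E * E = y * E := fun y => by rw [mul_assoc, hE.2]
  have hstar_x : star x = 1 - E - Q + Q * E + Q * E := by
    simp [hx_def, star_sub, star_add, star_mul, hQ.1, hE.1]
  have hd1 : star x * x = d := by
    rw [hstar_x, hx_def, hd_def, hk_def]
    simp only [sub_mul, mul_sub, add_mul, mul_add, one_mul, mul_one, ← mul_assoc,
      hQ.2, hE.2, hxQQ, hxEE]
    abel
  have hd2 : x * star x = d := by
    rw [hstar_x, hx_def, hd_def, hk_def]
    simp only [sub_mul, mul_sub, add_mul, mul_add, one_mul, mul_one, ← mul_assoc,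
      hQ.2, hE.2, hxQQ, hxEE]
    abel
  have hxQ : x * Q = E * Q := by
    rw [hx_def]
    simp only [sub_mul, add_mul, one_mul, ← mul_assoc, hQ.2, hE.2, hxQQ, hxEE]
    abel
  have hEx : E * x = E * Q := by
    rw [hx_def]
    simp only [mul_sub, mul_add, mul_one, ← mul_assoc, hQ.2, hE.2, hxQQ, hxEE]
    abel
  have hdQ : Commute Q d := by
    have : Q * d = Q * E * Q ∧ d * Q = Q * E * Q := by
      constructor <;>
      · rw [hd_def, hk_def]
        simp only [sub_mul, mul_sub, one_mul, mul_one, ← mul_assoc, hQ.2, hE.2, hxQQ, hxEE]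
        abel
    exact (this.1.trans this.2.symm)
  have hd_sa : IsSelfAdjoint d := by
    have hQE : star (Q - E) = Q - E := by rw [star_sub, hQ.1, hE.1]
    rw [IsSelfAdjoint, hd_def, hk_def, star_sub, star_one, star_mul, hQE]
  have hd_unit : IsUnit d := by
    rw [hd_def]; exact (Units.oneSub k hk_norm).isUnit
  have hspec : ∀ t ∈ spectrum ℝ d, 1 - ‖k‖ ≤ t := by
    intro t ht
    have h1 : (1 - t : ℝ) ∈ spectrum ℝ k := by
      rw [spectrum.mem_iff] at ht ⊢
      intro hu
      apply ht
      have : algebraMap ℝ B (1 - t) - k = -(algebraMap ℝ B t - d) := by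
        rw [hd_def]; rw [map_sub, map_one]; abel
      rw [this] at hu
      exact (IsUnit.neg_iff _).mp hu
    have := spectrum.norm_le_norm_of_mem h1
    have : |1 - t| ≤ ‖k‖ := by simpa using this
    have := abs_le.mp this
    linarith [this.1, this.2]
  set g : ℝ → ℝ := fun t => (Real.sqrt t)⁻¹ with hg_def
  have hg_cont : ContinuousOn g (spectrum ℝ d) := by
    apply ContinuousOn.inv₀ (Real.continuous_sqrt.continuousOn)
    intro t ht
    have := hspec t ht
    exact Real.sqrt_ne_zero'.mpr (by linarith)
  set s : B := cfc g d with hs_def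
  have hs_sa : IsSelfAdjoint s := cfc_predicate g d
  have hss : s * s * d = 1 := by
    rw [hs_def, ← cfc_mul g g d hg_cont hg_cont]
    nth_rewrite 2 [← cfc_id (R := ℝ) d hd_sa]
    rw [← cfc_mul _ _ d (by exact (hg_cont.mul hg_cont)) continuousOn_id]
    rw [← cfc_const_one (R := ℝ) d hd_sa]
    apply cfc_congr
    intro t ht
    have h1 : 1 - ‖k‖ ≤ t := hspec t ht
    have ht0 : 0 < t := by linarith
    simp only [id_eq]
    rw [← mul_inv (Real.sqrt t) (Real.sqrt t), Real.mul_self_sqrt ht0.le]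
    exact inv_mul_cancel₀ ht0.ne'
  have hsQ : Commute Q s := Commute.cfc_real_aux hd_sa hdQ g
  have hsd : Commute d s := Commute.cfc_real_aux hd_sa (Commute.refl d) g
  set w : B := ↑hd_unit.unit⁻¹ with hw_def
  have hw1 : w * d = 1 := hd_unit.val_inv_mul
  have hw2 : d * w = 1 := hd_unit.mul_val_inv
  have hssw : s * s = w := by
    calc s * s = s * s * (d * w) := by rw [hw2, mul_one]
    _ = (s * s * d) * w := by noncomm_ring
    _ = w := by rw [hss, one_mul]
  refine ⟨x * s, ?_, ?_, ?_⟩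
  · rw [star_mul, hs_sa.star_eq]
    calc s * star x * (x * s) = s * (star x * x) * s := by noncomm_ring
    _ = s * d * s := by rw [hd1]
    _ = s * s * d := by rw [mul_assoc, hsd.eq, ← mul_assoc]
    _ = 1 := hss
  · rw [star_mul, hs_sa.star_eq]
    have hab : (w * star x) * x = 1 := by rw [mul_assoc, hd1, hw1]
    have hxb : x * (star x * w) = 1 := by rw [← mul_assoc, hd2, hw2]
    have heq : w * star x = star x * w := by
      calc w * star x = (w * star x) * (x * (star x * w)) := by rw [hxb, mul_one]
      _ = ((w * star x) * x) * (star x * w) := by noncomm_ring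
      _ = star x * w := by rw [hab, one_mul]
    calc x * s * (s * star x) = x * (s * s) * star x := by noncomm_ring
    _ = x * w * star x := by rw [hssw]
    _ = x * (w * star x) := by rw [mul_assoc]
    _ = x * (star x * w) := by rw [heq]
    _ = 1 := hxb
  · calc x * s * Q = x * (s * Q) := by rw [mul_assoc]
    _ = x * (Q * s) := by rw [← hsQ.eq]
    _ = (x * Q) * s := by rw [mul_assoc]
    _ = (E * x) * s := by rw [hxQ, ← hEx]
    _ = E * (x * s) := by rw [mul_assoc]
end Unital

section NonUnital
variable {A : Type*} [NonUnitalCStarAlgebra A] [PartialOrder A] [StarOrderedRing A]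

omit [PartialOrder A] in
lemma near_projection {a : A} (ha : IsSelfAdjoint a) {ε : ℝ} (hε0 : 0 ≤ ε)
    (hε : ε < 1/16) (hquad : ‖a * a - a‖ ≤ 3*ε) :
    ∃ e c : A, IsProjection e ∧ ‖e - a‖ ≤ 4*ε ∧ e = a * c ∧ e = c * a := by
  set f : ℝ → ℝ := fun t => min 1 (max 0 (2*t - 1/2)) with hf_def
  have hf_cont : Continuous f := by fun_prop
  have hf0 : f 0 = 0 := by norm_num [hf_def]
  have hq : ∀ t ∈ quasispectrum ℝ a, |t*t - t| ≤ 3*ε := by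
    intro t ht
    have key : cfcₙ (fun t : ℝ => t*t - t) a = a * a - a := by
      rw [cfcₙ_sub _ _ a, cfcₙ_mul _ _ a, cfcₙ_id' ℝ a]
    have := norm_apply_le_norm_cfcₙ (fun t : ℝ => t*t - t) a ht
      (by fun_prop) (by norm_num) ha
    rw [key] at this
    calc |t*t - t| = ‖t*t - t‖ := rfl
    _ ≤ ‖a * a - a‖ := this
    _ ≤ 3*ε := hquad
  have hcases : ∀ t ∈ quasispectrum ℝ a, (t < 1/4 ∧ |t| ≤ 4*ε) ∨ (3/4 < t ∧ |t - 1| ≤ 4*ε) := by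
    intro t ht
    have h1 := hq t ht
    have habs : |t| * |t - 1| ≤ 3*ε := by
      calc |t| * |t-1| = |t*(t-1)| := (abs_mul t (t-1)).symm
      _ = |t*t - t| := by ring_nf
      _ ≤ 3*ε := h1
    rcases lt_or_ge t (1/4 : ℝ) with hlt | hge
    · left
      refine ⟨hlt, ?_⟩
      have h2 : (3/4 : ℝ) ≤ |t - 1| := by
        rw [abs_sub_comm, abs_of_nonneg (by linarith)]; linarith
      nlinarith [abs_nonneg t]
    · right
      rcases le_or_gt t (3/4 : ℝ) with hle | hgt
      · exfalso
        have h3 : |t| = t := abs_of_nonneg (by linarith)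
        have h4 : |t - 1| = 1 - t := by rw [abs_sub_comm, abs_of_nonneg (by linarith)]
        nlinarith
      · refine ⟨hgt, ?_⟩
        have h3 : |t| = t := abs_of_nonneg (by linarith)
        nlinarith [abs_nonneg (t-1)]
  have hffσ : ∀ t ∈ quasispectrum ℝ a, f t * f t = f t := by
    intro t ht
    rcases hcases t ht with ⟨h1, _⟩ | ⟨h1, _⟩
    · have : f t = 0 := by
        simp only [hf_def]
        rw [max_eq_left (by linarith), min_eq_right (by norm_num)]
      rw [this]; ring
    · have : f t = 1 := by
        simp only [hf_def]
        rw [max_eq_right (by linarith), min_eq_left (by linarith)]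
      rw [this]; ring
  have hfdist : ∀ t ∈ quasispectrum ℝ a, |f t - t| ≤ 4*ε := by
    intro t ht
    rcases hcases t ht with ⟨h1, h2⟩ | ⟨h1, h2⟩
    · have : f t = 0 := by
        simp only [hf_def]
        rw [max_eq_left (by linarith), min_eq_right (by norm_num)]
      rw [this]; rwa [zero_sub, abs_neg]
    · have : f t = 1 := by
        simp only [hf_def]
        rw [max_eq_right (by linarith), min_eq_left (by linarith)]
      rw [this, abs_sub_comm]; exact h2
  set e : A := cfcₙ f a with he_def
  have he_sa : IsSelfAdjoint e := cfcₙ_predicate f a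
  have he_idem : e * e = e := by
    rw [he_def, ← cfcₙ_mul f f a hf_cont.continuousOn hf0 hf_cont.continuousOn hf0]
    exact cfcₙ_congr hffσ
  have he_dist : ‖e - a‖ ≤ 4*ε := by
    have : e - a = cfcₙ (fun t => f t - t) a := by
      rw [cfcₙ_sub f (fun t => t) a hf_cont.continuousOn hf0 continuousOn_id rfl, cfcₙ_id' ℝ a]
    rw [this]
    exact norm_cfcₙ_le fun t ht => hfdist t ht
  set g : ℝ → ℝ := fun t => f t * (max t (1/4))⁻¹ with hg_def
  have hmax_pos : ∀ t : ℝ, (0:ℝ) < max t (1/4) := fun t => lt_max_of_lt_right (by norm_num)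
  have hg_cont : Continuous g := by
    apply hf_cont.mul
    exact ((continuous_id.max continuous_const).inv₀ (fun t => (hmax_pos t).ne'))
  have hg0 : g 0 = 0 := by rw [hg_def]; simp [hf0]
  have hfact : ∀ t : ℝ, t * g t = f t := by
    intro t
    rcases lt_or_ge t (1/4 : ℝ) with hlt | hge
    · have hft : f t = 0 := by
        simp only [hf_def]
        rw [max_eq_left (by linarith), min_eq_right (by norm_num)]
      simp only [hg_def, hft, zero_mul, mul_zero]
    · have hmax : max t (1/4 : ℝ) = t := max_eq_left hge
      have ht0 : t ≠ 0 := by intro h; rw [h] at hge; norm_num at hge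
      simp only [hg_def, hmax]
      field_simp
  refine ⟨e, cfcₙ g a, ⟨he_sa.star_eq, he_idem⟩, he_dist, ?_, ?_⟩
  · conv_lhs => rw [he_def]
    rw [← cfcₙ_congr (fun t _ => hfact t)]
    rw [cfcₙ_mul (fun t => t) g a continuousOn_id rfl hg_cont.continuousOn hg0]
    rw [cfcₙ_id' ℝ a]
  · conv_lhs => rw [he_def]
    rw [← cfcₙ_congr (fun t _ => (mul_comm (g t) t ▸ hfact t : g t * t = f t))]
    rw [cfcₙ_mul g (fun t => t) a hg_cont.continuousOn hg0 continuousOn_id rfl]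
    rw [cfcₙ_id' ℝ a]
end NonUnital

/-- Let `A` be a C*-algebra (with its canonical order) admitting an increasing
countable approximate unit `(pₙ)` of projections.  Then the following are
equivalent:
(ii) every projection `p ∈ A` is equivalent to a projection orthogonal to it;
(iii) for all `n` there is `m > n` with `pₙ ≲ pₘ - pₙ`. -/
theorem projection_orth_equiv_iff_subequiv {A : Type*} [NonUnitalCStarAlgebra A]
    [PartialOrder A] [StarOrderedRing A]
    (p : ℕ → A) (hproj : ∀ n, IsProjection (p n))
    (hincr : ∀ n, p n ≤ p (n + 1))
    (happroxL : ∀ a : A, Filter.Tendsto (fun n => p n * a) Filter.atTop (nhds a))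
    (happroxR : ∀ a : A, Filter.Tendsto (fun n => a * p n) Filter.atTop (nhds a)) :
    (∀ q : A, IsProjection q →
        ∃ q' : A, IsProjection q' ∧ MvNEquiv q q' ∧ q * q' = 0) ↔
      (∀ n : ℕ, ∃ m : ℕ, n < m ∧ MvNSubEquiv (p n) (p m - p n)) := by
  classical
  have hmono : Monotone p := monotone_nat_of_le_succ hincr
  have hmul1 : ∀ {n m : ℕ}, n ≤ m → p n * p m = p n :=
    fun {n m} h => (hproj n).mul_eq_of_le (hproj m) (hmono h)
  have hmul2 : ∀ {n m : ℕ}, n ≤ m → p m * p n = p n :=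
    fun {n m} h => (hproj n).mul_eq_of_le' (hproj m) (hmono h)
  -- choose good approximating index
  have happrox : ∀ (q : A), IsProjection q → ∀ N : ℕ,
      ∃ n, N ≤ n ∧ ‖p n * q * p n - q‖ < 1/32 := by
    intro q hq N
    obtain ⟨N₁, hN₁⟩ := Metric.tendsto_atTop.mp (happroxL q) (1/64) (by norm_num)
    obtain ⟨N₂, hN₂⟩ := Metric.tendsto_atTop.mp (happroxR q) (1/64) (by norm_num)
    refine ⟨max N (max N₁ N₂), le_max_left _ _, ?_⟩
    set n := max N (max N₁ N₂) with hn
    have e1 : ‖p n * q - q‖ < 1/64 := by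
      have := hN₁ n (le_trans (le_max_left _ _) (le_max_right _ _))
      rwa [dist_eq_norm] at this
    have e2 : ‖q * p n - q‖ < 1/64 := by
      have := hN₂ n (le_trans (le_max_right _ _) (le_max_right _ _))
      rwa [dist_eq_norm] at this
    have key : p n * q * p n - q = p n * (q * p n - q) + (p n * q - q) := by noncomm_ring
    calc ‖p n * q * p n - q‖ = ‖p n * (q * p n - q) + (p n * q - q)‖ := by rw [key]
    _ ≤ ‖p n * (q * p n - q)‖ + ‖p n * q - q‖ := norm_add_le _ _
    _ ≤ ‖p n‖ * ‖q * p n - q‖ + ‖p n * q - q‖ := by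
        gcongr
        exact norm_mul_le _ _
    _ < 1/32 := by
        have h1 : ‖p n‖ * ‖q * p n - q‖ ≤ 1 * ‖q * p n - q‖ := by
          gcongr
          exact (hproj n).norm_le_one'
        rw [one_mul] at h1
        linarith
  -- build a projection `e` living under `p n` close to `q`
  have build_e : ∀ (q : A), IsProjection q → ∀ n : ℕ, ‖p n * q * p n - q‖ < 1/32 →
      ∃ e c : A, IsProjection e ∧ ‖e - q‖ < 1 ∧
        e = (p n * q * p n) * c ∧ e = c * (p n * q * p n) := by
    intro q hq n hn
    set a : A := p n * q * p n with ha_def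
    have ha_sa : IsSelfAdjoint a := by
      rw [IsSelfAdjoint, ha_def]
      simp only [star_mul, (hproj n).1, hq.1, star_star]
      rw [mul_assoc]
    have hqn : ‖q‖ ≤ 1 := hq.norm_le_one'
    have hpn : ‖p n‖ ≤ 1 := (hproj n).norm_le_one'
    have han : ‖a‖ ≤ 1 := by
      calc ‖a‖ ≤ ‖p n * q‖ * ‖p n‖ := norm_mul_le _ _
      _ ≤ (‖p n‖ * ‖q‖) * ‖p n‖ := by gcongr; exact norm_mul_le _ _
      _ ≤ 1 := by nlinarith [norm_nonneg (p n), norm_nonneg q,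
        mul_nonneg (norm_nonneg (p n)) (norm_nonneg q)]
    have haq : ‖a - q‖ ≤ 1/32 := hn.le
    have hquad : ‖a * a - a‖ ≤ 3 * (1/32) := by
      have hid : a*a - a = a*(a-q) + (a-q)*q + (q*q - a) := by noncomm_ring
      rw [hq.2] at hid
      calc ‖a*a - a‖ = ‖a*(a-q) + (a-q)*q + (q - a)‖ := by rw [hid]
      _ ≤ ‖a*(a-q) + (a-q)*q‖ + ‖q - a‖ := norm_add_le _ _
      _ ≤ ‖a*(a-q)‖ + ‖(a-q)*q‖ + ‖q - a‖ := by gcongr; exact norm_add_le _ _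
      _ ≤ ‖a‖*‖a-q‖ + ‖a-q‖*‖q‖ + ‖a - q‖ := by
          rw [norm_sub_rev q a]
          gcongr <;> exact norm_mul_le _ _
      _ ≤ 3 * (1/32) := by nlinarith [norm_nonneg (a - q), norm_nonneg a, norm_nonneg q]
    obtain ⟨e, c, he, hdist, hec1, hec2⟩ :=
      near_projection ha_sa (by norm_num : (0:ℝ) ≤ 1/32) (by norm_num) hquad
    refine ⟨e, c, he, ?_, hec1, hec2⟩
    calc ‖e - q‖ = ‖(e - a) + (a - q)‖ := by congr 1; abel
    _ ≤ ‖e - a‖ + ‖a - q‖ := norm_add_le _ _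
    _ < 1 := by linarith [hdist]
  -- helpers for the unitization
  have hinj : Function.Injective ((↑) : A → Unitization ℂ A) := Unitization.inr_injective
  have hinr_snd : ∀ x : Unitization ℂ A, x.fst = 0 → ((x.snd : A) : Unitization ℂ A) = x := by
    intro x hx
    ext <;> simp [hx]
  have hinr_sub : ∀ u u' : A, ((u - u' : A) : Unitization ℂ A) = ↑u - ↑u' := by
    intro u u'
    ext <;> simp
  have hprojB : ∀ u : A, IsProjection u →
      star ((u : Unitization ℂ A)) = ↑u ∧ (u : Unitization ℂ A) * ↑u = ↑u := by
    intro u hu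
    constructor
    · rw [← Unitization.inr_star, hu.1]
    · rw [← Unitization.inr_mul, hu.2]
  constructor
  · -- (ii) → (iii)
    intro hii n
    obtain ⟨q₀, hq₀, ⟨v, hv1, hv2⟩, horth⟩ := hii (p n) (hproj n)
    have horth' : q₀ * p n = 0 := by
      have := congrArg star horth
      rwa [star_mul, hq₀.1, (hproj n).1, star_zero] at this
    obtain ⟨m, hm, hmq⟩ := happrox q₀ hq₀ (n+1)
    have hnm : n < m := lt_of_lt_of_le (Nat.lt_succ_self n) hm
    obtain ⟨e, c, he, hdist, hec1, hec2⟩ := build_e q₀ hq₀ m hmq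
    set a : A := p m * q₀ * p m with ha_def
    have hpna : p n * a = 0 := by
      calc p n * (p m * q₀ * p m) = (p n * p m) * q₀ * p m := by noncomm_ring
      _ = 0 := by rw [hmul1 hnm.le, horth, zero_mul]
    have hapn : a * p n = 0 := by
      calc p m * q₀ * p m * p n = p m * q₀ * (p m * p n) := by noncomm_ring
      _ = p m * (q₀ * p n) := by rw [hmul2 hnm.le]; noncomm_ring
      _ = 0 := by rw [horth', mul_zero]
    have hpma : p m * a = a := by
      calc p m * (p m * q₀ * p m) = (p m * p m) * q₀ * p m := by noncomm_ring
      _ = a := by rw [(hproj m).2]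
    have hapm : a * p m = a := by
      calc p m * q₀ * p m * p m = p m * q₀ * (p m * p m) := by noncomm_ring
      _ = a := by rw [(hproj m).2]
    have hpne : p n * e = 0 := by
      rw [hec1, ← mul_assoc, hpna, zero_mul]
    have hepn : e * p n = 0 := by
      rw [hec2, mul_assoc, hapn, mul_zero]
    have hpme : p m * e = e := by
      rw [hec1, ← mul_assoc, hpma]
    have hsubproj : IsProjection (p m - p n) := (hproj n).sub_proj (hproj m) (hmono hnm.le)
    have hele : e ≤ p m - p n := by
      apply he.le_of_mul hsubproj
      rw [sub_mul, hpme, hpne, sub_zero]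
    -- unitization: unitary conjugating q₀ to e
    have hdistB : ‖(q₀ : Unitization ℂ A) - ↑e‖ < 1 := by
      rw [← hinr_sub, Unitization.norm_inr, norm_sub_rev]
      exact hdist
    obtain ⟨z, hz1, hz2, hz3⟩ := exists_unitary_conj (hprojB q₀ hq₀) (hprojB e he) hdistB
    have hWfst : (z * (q₀ : Unitization ℂ A)).fst = 0 := by simp
    set w : A := (z * (q₀ : Unitization ℂ A)).snd with hw_def
    have hwW : ((w : A) : Unitization ℂ A) = z * ↑q₀ := hinr_snd _ hWfst
    have hq₀B := hprojB q₀ hq₀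
    have hw1 : star w * w = q₀ := by
      apply hinj
      rw [Unitization.inr_mul, Unitization.inr_star, hwW]
      calc star (z * (q₀ : Unitization ℂ A)) * (z * ↑q₀)
          = ↑q₀ * (star z * z) * ↑q₀ := by rw [star_mul, hq₀B.1]; noncomm_ring
      _ = ↑q₀ * ↑q₀ := by rw [hz1, mul_one]
      _ = ↑q₀ := hq₀B.2
    have hw2 : w * star w = e := by
      apply hinj
      rw [Unitization.inr_mul, Unitization.inr_star, hwW]
      calc (z * (q₀ : Unitization ℂ A)) * star (z * ↑q₀)
          = z * (↑q₀ * ↑q₀) * star z := by rw [star_mul, hq₀B.1]; noncomm_ring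
      _ = (z * ↑q₀) * star z := by rw [hq₀B.2]
      _ = ↑e * (z * star z) := by rw [hz3]; noncomm_ring
      _ = ↑e := by rw [hz2, mul_one]
    refine ⟨m, hnm, star (w * v), ?_, ?_⟩
    · rw [star_star]
      calc star (w * v) * (w * v) = star v * (star w * w) * v := by
            rw [star_mul]; noncomm_ring
      _ = star v * (v * star v) * v := by rw [hw1, ← hv2]
      _ = (star v * v) * (star v * v) := by noncomm_ring
      _ = p n := by rw [hv1, (hproj n).2]
    · rw [star_star]
      have hts : (w * v) * star (w * v) = e := by
        calc (w * v) * star (w * v) = w * (v * star v) * star w := by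
              rw [star_mul]; noncomm_ring
        _ = w * (star w * w) * star w := by rw [hv2, ← hw1]
        _ = (w * star w) * (w * star w) := by noncomm_ring
        _ = e := by rw [hw2, he.2]
      rw [hts]
      exact hele
  · -- (iii) → (ii)
    intro hiii q hq
    obtain ⟨n, -, hnq⟩ := happrox q hq 0
    obtain ⟨e, c, he, hdist, hec1, hec2⟩ := build_e q hq n hnq
    set a : A := p n * q * p n with ha_def
    have hpna : p n * a = a := by
      calc p n * (p n * q * p n) = (p n * p n) * q * p n := by noncomm_ring
      _ = a := by rw [(hproj n).2]
    have hapn : a * p n = a := by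
      calc p n * q * p n * p n = p n * q * (p n * p n) := by noncomm_ring
      _ = a := by rw [(hproj n).2]
    have hpne : p n * e = e := by rw [hec1, ← mul_assoc, hpna]
    have hepn : e * p n = e := by rw [hec2, mul_assoc, hapn]
    have hele : e ≤ p n := he.le_of_mul (hproj n) hpne
    obtain ⟨m, hnm, v, hv1, hv2⟩ := hiii n
    obtain ⟨hvvv, hr⟩ := IsProjection.partial_isometry (v := v)
      (by rw [hv1]; exact hproj n)
    have hsubproj : IsProjection (p m - p n) := (hproj n).sub_proj (hproj m) (hmono hnm.le)
    set w : A := e * v with hw_def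
    have hww : w * star w = e := by
      calc (e * v) * star (e * v) = e * (v * star v) * e := by
            rw [star_mul, he.1]; noncomm_ring
      _ = e * (p n * e) := by rw [hv1]; noncomm_ring
      _ = e * e := by rw [hpne]
      _ = e := he.2
    have hq''_def : star w * w = star v * e * v := by
      calc star (e * v) * (e * v) = star v * (e * e) * v := by
            rw [star_mul, he.1]; noncomm_ring
      _ = star v * e * v := by rw [he.2]
    have hq''le : star w * w ≤ p m - p n := by
      rw [hq''_def]
      have h2 : star v * e * v ≤ star v * (p n) * v := star_left_conjugate_le_conjugate hele v
      have h3 : star v * p n * v = star v * v := by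
        rw [← hv1]
        calc star v * (v * star v) * v = (star v * v) * (star v * v) := by noncomm_ring
        _ = star v * v := hr.2
      exact h2.trans (h3 ▸ hv2)
    set q'' : A := star w * w with hq''
    have hq''proj : IsProjection q'' :=
      (IsProjection.partial_isometry (v := w) (by rw [hww]; exact he)).2
    have hepm : e * p m = e := he.mul_eq_of_le (hproj m) (hele.trans (hmono hnm.le))
    have heq'' : e * q'' = 0 := by
      have h5 : (p m - p n) * q'' = q'' := hq''proj.mul_eq_of_le' hsubproj hq''le
      have h6 : e * (p m - p n) = 0 := by rw [mul_sub, hepm, hepn, sub_self]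
      calc e * q'' = e * ((p m - p n) * q'') := by rw [h5]
      _ = (e * (p m - p n)) * q'' := by rw [mul_assoc]
      _ = 0 := by rw [h6, zero_mul]
    -- unitization
    have hdistB : ‖(q : Unitization ℂ A) - ↑e‖ < 1 := by
      rw [← hinr_sub, Unitization.norm_inr, norm_sub_rev]
      exact hdist
    obtain ⟨z, hz1, hz2, hz3⟩ := exists_unitary_conj (hprojB q hq) (hprojB e he) hdistB
    have hqB := hprojB q hq
    have heB := hprojB e he
    have hq''B := hprojB q'' hq''proj
    have hzstar : (q : Unitization ℂ A) * star z = star z * ↑e := by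
      have := congrArg star hz3
      rwa [star_mul, star_mul, hqB.1, heB.1] at this
    -- the orthogonal projection q'
    have hPfst : (star z * (q'' : Unitization ℂ A) * z).fst = 0 := by simp
    set q' : A := (star z * (q'' : Unitization ℂ A) * z).snd with hq'_def
    have hq'P : ((q' : A) : Unitization ℂ A) = star z * ↑q'' * z := hinr_snd _ hPfst
    have hq'1 : star q' = q' := by
      apply hinj
      rw [Unitization.inr_star, hq'P]
      calc star (star z * (q'' : Unitization ℂ A) * z)
          = star z * star ↑q'' * z := by simp only [star_mul, star_star]; noncomm_ring
      _ = star z * ↑q'' * z := by rw [hq''B.1]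
    have hq'2 : q' * q' = q' := by
      apply hinj
      rw [Unitization.inr_mul, hq'P]
      calc (star z * (q'' : Unitization ℂ A) * z) * (star z * ↑q'' * z)
          = star z * ↑q'' * (z * star z) * ↑q'' * z := by noncomm_ring
      _ = star z * (↑q'' * ↑q'') * z := by rw [hz2]; noncomm_ring
      _ = star z * ↑q'' * z := by rw [hq''B.2]
    -- the partial isometry
    have hVfst : (star z * ((star w : A) : Unitization ℂ A) * z).fst = 0 := by simp
    set v'' : A := (star z * ((star w : A) : Unitization ℂ A) * z).snd with hv''_def
    have hv''V : ((v'' : A) : Unitization ℂ A) = star z * ↑(star w) * z := hinr_snd _ hVfst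
    have hv''1 : star v'' * v'' = q := by
      apply hinj
      rw [Unitization.inr_mul, Unitization.inr_star, hv''V]
      calc star (star z * ((star w : A) : Unitization ℂ A) * z) * (star z * ↑(star w) * z)
          = star z * (star ↑(star w) * (z * star z) * ↑(star w)) * z := by
            simp only [star_mul, star_star]; noncomm_ring
      _ = star z * (star ↑(star w) * ↑(star w)) * z := by rw [hz2]; noncomm_ring
      _ = star z * ↑(w * star w) * z := by
            rw [Unitization.inr_mul, Unitization.inr_star, star_star]
      _ = star z * (↑e * z) := by rw [hww]; noncomm_ring
      _ = star z * (z * ↑q) := by rw [← hz3]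
      _ = (star z * z) * ↑q := by noncomm_ring
      _ = ↑q := by rw [hz1, one_mul]
    have hv''2 : v'' * star v'' = q' := by
      apply hinj
      rw [Unitization.inr_mul, Unitization.inr_star, hv''V, hq'P]
      calc (star z * ((star w : A) : Unitization ℂ A) * z) * star (star z * ↑(star w) * z)
          = star z * (↑(star w) * (z * star z) * star ↑(star w)) * z := by
            simp only [star_mul, star_star]; noncomm_ring
      _ = star z * (↑(star w) * star ↑(star w)) * z := by rw [hz2]; noncomm_ring
      _ = star z * ↑(star w * w) * z := by
            rw [Unitization.inr_mul, Unitization.inr_star, star_star]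
      _ = star z * ↑q'' * z := by rw [← hq'']
    have horthq : q * q' = 0 := by
      apply hinj
      rw [Unitization.inr_mul, hq'P]
      calc (q : Unitization ℂ A) * (star z * ↑q'' * z)
          = (↑q * star z) * ↑q'' * z := by noncomm_ring
      _ = star z * (↑e * ↑q'') * z := by rw [hzstar]; noncomm_ring
      _ = star z * ↑(e * q'') * z := by
            simp only [hq'', Unitization.inr_mul, Unitization.inr_star]
            try noncomm_ring
      _ = 0 := by rw [heq'', Unitization.inr_zero, mul_zero, zero_mul]
    exact ⟨q', ⟨hq'1, hq'2⟩, ⟨v'', hv''1, hv''2⟩, horthq⟩
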